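/- arXiv:1903.07206 — 3 statements merged into one kernel-verified Lean document; each statement's English description precedes it below -/
import Mathlib

section
/- Let c, J, m be positive integers. There exists a constant C = C(c,J,m), depending only on c, J, m, such that the following holds: if G is a nilpotent group of class at most c+1 that can be generated by m elements and such that γ_c(G) has cardinality at most J, then G has a subgroup H of nilpotency class at most c with index |G : H| ≤ C. One may take C = J^(m^c). -/
open Subgroup

open scoped commutatorElement

variable {G : Type*} [Group G]

/-- iterated left-normed commutator -/
def itcAux : G → List G → G
  | x, [] => x
  | x, g :: l => itcAux ⁅x, g⁆ l

lemma itcAux_append (x : G) (l : List G) (g : G) :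
    itcAux x (l ++ [g]) = ⁅itcAux x l, g⁆ := by
  induction l generalizing x with
  | nil => rfl
  | cons a l ih => simp [itcAux, ih]

lemma itcAux_mem {j : ℕ} {x : G} (hx : x ∈ (⊤ : Subgroup G).lowerCentralSeries j) (l : List G) :
    itcAux x l ∈ (⊤ : Subgroup G).lowerCentralSeries (j + l.length) := by
  induction l generalizing j x with
  | nil => simpa [itcAux] using hx
  | cons a l ih =>
    have h1 : ⁅x, a⁆ ∈ (⊤ : Subgroup G).lowerCentralSeries (j + 1) := by
      have : (⊤ : Subgroup G).lowerCentralSeries (j + 1) = ⁅(⊤ : Subgroup G).lowerCentralSeries j, ⊤⁆ := rfl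
      rw [this]
      exact commutator_mem_commutator hx (mem_top a)
    have h2 := ih h1
    show itcAux ⁅x, a⁆ l ∈ (⊤ : Subgroup G).lowerCentralSeries (j + (l.length + 1))
    have : j + (l.length + 1) = j + 1 + l.length := by omega
    rw [this]
    exact h2

/-- words of iterated commutators of length `k+1` over a generating set `T` -/
def WsetAux (T : Set G) (k : ℕ) : Set G :=
  {x | ∃ a l, a ∈ T ∧ (∀ b ∈ l, b ∈ T) ∧ List.length l = k ∧ x = itcAux a l}

lemma list_ofFn_of_range {n : ℕ} (s : Fin n → G) {k : ℕ} (l : List G)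
    (hl : l.length = k) (hb : ∀ b ∈ l, b ∈ Set.range s) :
    ∃ f : Fin k → Fin n, l = List.ofFn (fun j => s (f j)) := by
  subst hl
  induction l with
  | nil => exact ⟨Fin.elim0, rfl⟩
  | cons a l ih =>
    obtain ⟨i, hi⟩ := hb a (List.mem_cons_self)
    obtain ⟨f, hf⟩ := ih (fun b hbl => hb b (List.mem_cons_of_mem a hbl))
    refine ⟨Fin.cons i f, ?_⟩
    rw [List.ofFn_succ]
    simp only [Fin.cons_zero, Fin.cons_succ]
    rw [← hi, ← hf]

lemma lcs_le_closure_wset (T : Set G) (hT : Subgroup.closure T = ⊤) (k : ℕ) :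
    (⊤ : Subgroup G).lowerCentralSeries k ≤
      Subgroup.closure (WsetAux T k ∪ ((⊤ : Subgroup G).lowerCentralSeries (k + 1) : Set G)) := by
  induction k with
  | zero =>
    intro x hx
    have hx' : x ∈ Subgroup.closure T := by rw [hT]; trivial
    refine Subgroup.closure_mono ?_ hx'
    intro a ha
    exact Or.inl ⟨a, [], ha, by simp, rfl, rfl⟩
  | succ k ih =>
    set R : Subgroup G :=
      Subgroup.closure (WsetAux T (k + 1) ∪ ((⊤ : Subgroup G).lowerCentralSeries (k + 2) : Set G)) with hR
    -- R is closed under conjugation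
    have hconj : ∀ x ∈ R, ∀ g : G, g * x * g⁻¹ ∈ R := by
      intro x hx
      refine Subgroup.closure_induction ?_ ?_ ?_ ?_ hx
      · rintro y (hy | hy) g
        · -- y is a commutator word of weight k+2
          have hyR : y ∈ R := Subgroup.subset_closure (Or.inl hy)
          have hymem : y ∈ (⊤ : Subgroup G).lowerCentralSeries (k + 1) := by
            obtain ⟨a, l, _, _, hlen, rfl⟩ := hy
            have := itcAux_mem (j := 0) (mem_top a) l
            simpa [hlen] using this
          have hcomm : ⁅y⁻¹, g⁆ ∈ (⊤ : Subgroup G).lowerCentralSeries (k + 2) := by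
            have h1 : (⊤ : Subgroup G).lowerCentralSeries (k + 2) = ⁅(⊤ : Subgroup G).lowerCentralSeries (k + 1), ⊤⁆ := rfl
            rw [h1]
            exact commutator_mem_commutator (inv_mem hymem) (mem_top g)
          have : g * y * g⁻¹ = y * ⁅y⁻¹, g⁆ := by
            simp [commutatorElement_def]; group
          rw [this]
          exact mul_mem hyR (Subgroup.subset_closure (Or.inr hcomm))
        · have : g * y * g⁻¹ ∈ (⊤ : Subgroup G).lowerCentralSeries (k + 2) :=
            (Subgroup.lowerCentralSeries_normal ⊤ (k + 2)).conj_mem y hy g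
          exact Subgroup.subset_closure (Or.inr this)
      · intro g; simpa using one_mem R
      · intro x y _ _ hx hy g
        have : g * (x * y) * g⁻¹ = (g * x * g⁻¹) * (g * y * g⁻¹) := by group
        rw [this]; exact mul_mem (hx g) (hy g)
      · intro x _ hx g
        have : g * x⁻¹ * g⁻¹ = (g * x * g⁻¹)⁻¹ := by group
        rw [this]; exact inv_mem (hx g)
    -- key: commutators of γ_k elements with anything lie in R
    have key : ∀ x ∈ (⊤ : Subgroup G).lowerCentralSeries k, ∀ g : G, ⁅x, g⁆ ∈ R := by
      intro x hx
      have hx' := ih hx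
      refine Subgroup.closure_induction ?_ ?_ ?_ ?_ hx'
      · rintro y (hy | hy) g
        · -- y ∈ WsetAux T k : induct over g in closure T
          have hg : g ∈ Subgroup.closure T := by rw [hT]; trivial
          refine Subgroup.closure_induction ?_ ?_ ?_ ?_ hg
          · intro t ht
            obtain ⟨a, l, haT, hlT, hlen, rfl⟩ := hy
            refine Subgroup.subset_closure (Or.inl ⟨a, l ++ [t], haT, ?_, ?_, ?_⟩)
            · intro b hb
              rcases List.mem_append.mp hb with h | h
              · exact hlT b h
              · simp at h; subst h; exact ht
            · simp [hlen]
            · rw [itcAux_append]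
          · simpa using one_mem R
          · intro g h _ _ hgR hhR
            have : ⁅y, g * h⁆ = ⁅y, g⁆ * (g * ⁅y, h⁆ * g⁻¹) := by
              simp [commutatorElement_def]; group
            rw [this]
            exact mul_mem hgR (hconj _ hhR g)
          · intro g _ hgR
            have : ⁅y, g⁻¹⁆ = g⁻¹ * ⁅y, g⁆⁻¹ * g := by
              simp [commutatorElement_def]; group
            rw [this]
            have := hconj _ (inv_mem hgR) g⁻¹
            simpa using this
        · have : ⁅y, g⁆ ∈ (⊤ : Subgroup G).lowerCentralSeries (k + 2) := by
            have h1 : (⊤ : Subgroup G).lowerCentralSeries (k + 2) = ⁅(⊤ : Subgroup G).lowerCentralSeries (k + 1), ⊤⁆ := rfl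
            rw [h1]
            exact commutator_mem_commutator hy (mem_top g)
          exact Subgroup.subset_closure (Or.inr this)
      · intro g; simpa using one_mem R
      · intro x y _ _ hx hy g
        have : ⁅x * y, g⁆ = (x * ⁅y, g⁆ * x⁻¹) * ⁅x, g⁆ := by
          simp [commutatorElement_def]; group
        rw [this]
        exact mul_mem (hconj _ (hy g) x) (hx g)
      · intro x _ hx g
        have : ⁅x⁻¹, g⁆ = x⁻¹ * ⁅x, g⁆⁻¹ * x := by
          simp [commutatorElement_def]; group
        rw [this]
        have := hconj _ (inv_mem (hx g)) x⁻¹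
        simpa using this
    have h1 : (⊤ : Subgroup G).lowerCentralSeries (k + 1) = ⁅(⊤ : Subgroup G).lowerCentralSeries k, ⊤⁆ := rfl
    rw [h1]
    exact commutator_le.mpr fun x hx g _ => key x hx g


/-- Let `c`, `J`, `m` be positive integers.  If `G` is a nilpotent group of class at most
`c + 1` (i.e. `γ_{c+1}(G) = 1`) that can be generated by `m` elements and such that
`γ_c(G)` is finite of cardinality at most `J`, then `G` has a subgroup `H` of nilpotency
class at most `c` (i.e. `γ_c(H) = 1`) of index at most `C = J ^ (m ^ c)`; in particular
the bound `C` depends only on `c`, `J` and `m`. -/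
theorem nilpotent_class_reduction (c J m : ℕ) (hc : 0 < c) (hJ : 0 < J) (hm : 0 < m) :
    ∀ (G : Type) [Group G],
      (⊤ : Subgroup G).lowerCentralSeries (c + 1) = ⊥ →
      (∃ S : Finset G, S.card ≤ m ∧ Subgroup.closure (S : Set G) = ⊤) →
      ∀ _ : Finite ((⊤ : Subgroup G).lowerCentralSeries c),
      Nat.card ((⊤ : Subgroup G).lowerCentralSeries c) ≤ J →
      ∃ H : Subgroup G, (⊤ : Subgroup H).lowerCentralSeries c = ⊥ ∧ H.index ≤ J ^ (m ^ c) := by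
  obtain ⟨c', rfl⟩ : ∃ c', c = c' + 1 := ⟨c - 1, (Nat.succ_pred_eq_of_pos hc).symm⟩
  intro G _ hG ⟨S, hScard, hSgen⟩ hfin hJcard
  -- γ_c(G) is central
  have hcent : ∀ z ∈ (⊤ : Subgroup G).lowerCentralSeries (c' + 1), ∀ g : G, z * g = g * z := by
    intro z hz g
    have h1 : ⁅z, g⁆ ∈ (⊤ : Subgroup G).lowerCentralSeries (c' + 1 + 1) := by
      have h2 : (⊤ : Subgroup G).lowerCentralSeries (c' + 1 + 1) = ⁅(⊤ : Subgroup G).lowerCentralSeries (c' + 1), ⊤⁆ := rfl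
      rw [h2]
      exact commutator_mem_commutator hz (mem_top g)
    rw [hG, Subgroup.mem_bot] at h1
    exact commutatorElement_eq_one_iff_mul_comm.mp h1
  set n := S.card with hn
  set s : Fin n → G := fun i => ((S.equivFin.symm i : S) : G) with hs
  have hrange : Set.range s = (S : Set G) := by
    ext b
    constructor
    · rintro ⟨i, rfl⟩; exact (S.equivFin.symm i).2
    · intro hb
      exact ⟨S.equivFin ⟨b, hb⟩, by simp [hs]⟩
  -- the commutator word elements
  set xw : Fin n × (Fin c' → Fin n) → G :=
    fun w => itcAux (s w.1) (List.ofFn (fun j => s (w.2 j))) with hxw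
  have hxwmem : ∀ w, xw w ∈ (⊤ : Subgroup G).lowerCentralSeries c' := by
    intro w
    have := itcAux_mem (j := 0) (mem_top (s w.1)) (List.ofFn (fun j => s (w.2 j)))
    simpa using this
  -- the homomorphisms
  have hphimem : ∀ w (g : G), ⁅xw w, g⁆ ∈ (⊤ : Subgroup G).lowerCentralSeries (c' + 1) := by
    intro w g
    have h2 : (⊤ : Subgroup G).lowerCentralSeries (c' + 1) = ⁅(⊤ : Subgroup G).lowerCentralSeries c', ⊤⁆ := rfl
    rw [h2]
    exact commutator_mem_commutator (hxwmem w) (mem_top g)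
  set φ : Fin n × (Fin c' → Fin n) → (G →* ↥((⊤ : Subgroup G).lowerCentralSeries (c' + 1))) :=
    fun w =>
      { toFun := fun g => ⟨⁅xw w, g⁆, hphimem w g⟩
        map_one' := by ext; simp
        map_mul' := by
          intro g h
          ext
          show ⁅xw w, g * h⁆ = ⁅xw w, g⁆ * ⁅xw w, h⁆
          have h1 : ⁅xw w, g * h⁆ = ⁅xw w, g⁆ * (g * ⁅xw w, h⁆ * g⁻¹) := by
            simp [commutatorElement_def]; group
          rw [h1, ← hcent _ (hphimem w h) g]
          group } with hφ
  set H : Subgroup G := ⨅ w, (φ w).ker with hH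
  refine ⟨H, ?_, ?_⟩
  · -- nilpotency of H
    have hker : ∀ h ∈ H, ∀ w, ⁅xw w, h⁆ = 1 := by
      intro h hh w
      have : h ∈ (φ w).ker := (Subgroup.mem_iInf.mp hh) w
      have := congrArg Subtype.val (MonoidHom.mem_ker.mp this)
      exact this
    have hcentH : ∀ h ∈ H, ∀ x ∈ (⊤ : Subgroup G).lowerCentralSeries c', x * h = h * x := by
      intro h hh x hx
      have hle : Subgroup.closure
          (WsetAux (S : Set G) c' ∪ ((⊤ : Subgroup G).lowerCentralSeries (c' + 1) : Set G)) ≤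
          Subgroup.centralizer {h} := by
        rw [Subgroup.closure_le]
        rintro y (hy | hy)
        · obtain ⟨a, l, haS, hlS, hlen, rfl⟩ := hy
          rw [← hrange] at haS
          obtain ⟨i, hi⟩ := haS
          obtain ⟨f, hf⟩ := list_ofFn_of_range s l hlen (fun b hb => by
            rw [hrange]; exact hlS b hb)
          have : itcAux a l = xw (i, f) := by rw [hxw]; simp only; rw [← hi, ← hf]
          rw [this]
          have h1 := hker h hh (i, f)
          have h2 : xw (i, f) * h = h * xw (i, f) :=
            commutatorElement_eq_one_iff_mul_comm.mp h1
          refine Subgroup.mem_centralizer_iff.mpr ?_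
          intro g hg
          have hg' : g = h := hg
          subst hg'
          exact h2.symm
        · refine Subgroup.mem_centralizer_iff.mpr ?_
          intro g hg
          have hg' : g = h := hg
          subst hg'
          exact (hcent y hy g).symm
      have := hle (lcs_le_closure_wset (S : Set G) hSgen c' hx)
      exact (Subgroup.mem_centralizer_iff.mp this h rfl).symm
    rw [eq_bot_iff]
    have h2 : (⊤ : Subgroup ↥H).lowerCentralSeries (c' + 1) = ⁅(⊤ : Subgroup ↥H).lowerCentralSeries c', ⊤⁆ := rfl
    rw [h2]
    refine commutator_le.mpr ?_
    intro x hx y _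
    rw [Subgroup.mem_bot]
    have hxG : (x : G) ∈ (⊤ : Subgroup G).lowerCentralSeries c' :=
      Subgroup.lowerCentralSeries_map_subtype_le H c' (Subgroup.mem_map_of_mem _ hx)
    have : (x : G) * (y : G) = (y : G) * (x : G) := hcentH y y.2 x hxG
    have hcomm : ⁅(x : G), (y : G)⁆ = 1 := commutatorElement_eq_one_iff_mul_comm.mpr this
    ext
    simpa [commutatorElement_def] using hcomm
  · -- index bound
    haveI : Finite ↥((⊤ : Subgroup G).lowerCentralSeries (c' + 1)) := hfin
    have hk : ∀ w, ((φ w).ker).index ≤ J := by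
      intro w
      rw [Subgroup.index_ker]
      calc Nat.card ↥(φ w).range ≤ Nat.card ↥((⊤ : Subgroup G).lowerCentralSeries (c' + 1)) :=
            Nat.card_le_card_of_injective _ Subtype.val_injective
        _ ≤ J := hJcard
    calc H.index ≤ ∏ w : Fin n × (Fin c' → Fin n), ((φ w).ker).index :=
          Subgroup.index_iInf_le _
      _ ≤ ∏ _w : Fin n × (Fin c' → Fin n), J := Finset.prod_le_prod' (fun w _ => hk w)
      _ = J ^ (n * n ^ c') := by simp [Finset.prod_const, Fintype.card_prod, Fintype.card_fun]
      _ ≤ J ^ (m ^ (c' + 1)) := by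
          refine Nat.pow_le_pow_right hJ ?_
          calc n * n ^ c' ≤ m * m ^ c' :=
                Nat.mul_le_mul hScard (Nat.pow_le_pow_left hScard c')
            _ = m ^ (c' + 1) := by ring
end

section
/- Let G be a nilpotent group of class at most c+1 with generating set g₁,...,g_m. Let H be the intersection over all sequences 1 ≤ i₁,...,i_c ≤ m of the kernels of the maps φ_{i₁,...,i_c} : G → γ_c(G), g ↦ [[[...[[g_{i₁},g_{i₂}],g_{i₃}],...],g_{i_c}],g]. Then H is nilpotent of class at most c. -/
open scoped commutatorElement

/-- The left-normed iterated commutator of a list of group elements: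
`iterComm [g₁, g₂, …, g_k] = [[…[[g₁,g₂],g₃]…],g_k]`. -/
def iterComm {G : Type*} [Group G] : List G → G
  | [] => 1
  | a :: l => l.foldl (fun x y => ⁅x, y⁆) a

section AuxLemmas

variable {G : Type*} [Group G]

private lemma lcs_succ_eq (k : ℕ) :
    (⊤ : Subgroup G).lowerCentralSeries (k + 1) = ⁅(⊤ : Subgroup G).lowerCentralSeries k, (⊤ : Subgroup G)⁆ := rfl

private lemma lcs_cast {i j : ℕ} {x : G}
    (hx : x ∈ (⊤ : Subgroup G).lowerCentralSeries i) (h : i = j) : x ∈ (⊤ : Subgroup G).lowerCentralSeries j := h ▸ hx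

private lemma comm_mem (k : ℕ) {x : G} (hx : x ∈ (⊤ : Subgroup G).lowerCentralSeries k) (a : G) :
    ⁅x, a⁆ ∈ (⊤ : Subgroup G).lowerCentralSeries (k + 1) := by
  rw [lcs_succ_eq]
  exact Subgroup.commutator_mem_commutator hx (Subgroup.mem_top a)

private lemma comm_mem' (k : ℕ) {x : G} (hx : x ∈ (⊤ : Subgroup G).lowerCentralSeries k) (a : G) :
    ⁅a, x⁆ ∈ (⊤ : Subgroup G).lowerCentralSeries (k + 1) := by
  rw [← commutatorElement_inv]
  exact ((⊤ : Subgroup G).lowerCentralSeries (k + 1)).inv_mem (comm_mem k hx a)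

private lemma cong_trans {S : Subgroup G} {u v w : G}
    (h1 : u * v⁻¹ ∈ S) (h2 : v * w⁻¹ ∈ S) : u * w⁻¹ ∈ S := by
  have := S.mul_mem h1 h2
  simpa [mul_assoc] using this

/-- congruence mod `γ j` is preserved by bracketing, raising the level by one. -/
private lemma comm_cong (j : ℕ) (a : G) {u v : G} (h : u * v⁻¹ ∈ (⊤ : Subgroup G).lowerCentralSeries j) :
    ⁅u, a⁆ * ⁅v, a⁆⁻¹ ∈ (⊤ : Subgroup G).lowerCentralSeries (j + 1) := by
  have hn : ((⊤ : Subgroup G).lowerCentralSeries j).Normal := inferInstance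
  have hn1 : ((⊤ : Subgroup G).lowerCentralSeries (j + 1)).Normal := inferInstance
  have hwmem : v⁻¹ * u ∈ (⊤ : Subgroup G).lowerCentralSeries j := by
    have := hn.conj_mem _ h v⁻¹
    simpa [mul_assoc] using this
  have hu : u = v * (v⁻¹ * u) := by group
  have hid : ⁅u, a⁆ * ⁅v, a⁆⁻¹ = v * ⁅v⁻¹ * u, a⁆ * v⁻¹ := by
    conv_lhs => rw [hu]
    simp only [commutatorElement_def]; group
  rw [hid]
  exact hn1.conj_mem _ (comm_mem j hwmem a) v

private lemma foldl_mem : ∀ (l : List G) (k : ℕ) (x : G), x ∈ (⊤ : Subgroup G).lowerCentralSeries k →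
    List.foldl (fun x y => ⁅x, y⁆) x l ∈ (⊤ : Subgroup G).lowerCentralSeries (k + l.length)
  | [], k, x, hx => hx
  | a :: t, k, x, hx => by
    have h := foldl_mem t (k + 1) ⁅x, a⁆ (comm_mem k hx a)
    exact lcs_cast h (by simp; omega)

private lemma foldl_one : ∀ l : List G, List.foldl (fun x y => ⁅x, y⁆) 1 l = 1
  | [] => rfl
  | a :: t => by
    have : ⁅(1 : G), a⁆ = 1 := commutatorElement_one_left a
    show List.foldl (fun x y => ⁅x, y⁆) ⁅(1 : G), a⁆ t = 1
    rw [this]; exact foldl_one t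

private lemma foldl_cong : ∀ (l : List G) (j : ℕ) (u v : G), u * v⁻¹ ∈ (⊤ : Subgroup G).lowerCentralSeries j →
    (List.foldl (fun x y => ⁅x, y⁆) u l) * (List.foldl (fun x y => ⁅x, y⁆) v l)⁻¹ ∈
      (⊤ : Subgroup G).lowerCentralSeries (j + l.length)
  | [], j, u, v, h => h
  | a :: t, j, u, v, h => by
    have h1 := foldl_cong t (j + 1) ⁅u, a⁆ ⁅v, a⁆ (comm_cong j a h)
    exact lcs_cast h1 (by simp; omega)

private lemma foldl_mul : ∀ (l : List G) (k : ℕ) (x y : G),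
    x ∈ (⊤ : Subgroup G).lowerCentralSeries k → y ∈ (⊤ : Subgroup G).lowerCentralSeries k →
    (List.foldl (fun x y => ⁅x, y⁆) (x * y) l) *
      ((List.foldl (fun x y => ⁅x, y⁆) x l) * (List.foldl (fun x y => ⁅x, y⁆) y l))⁻¹ ∈
      (⊤ : Subgroup G).lowerCentralSeries (k + 1 + l.length)
  | [], k, x, y, hx, hy => by
    have h : (x * y) * (x * y)⁻¹ = 1 := by group
    show (x * y) * (x * y)⁻¹ ∈ _
    rw [h]; exact Subgroup.one_mem _
  | a :: t, k, x, y, hx, hy => by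
    have E1 : ⁅x * y, a⁆ * (⁅x, a⁆ * ⁅y, a⁆)⁻¹ ∈ (⊤ : Subgroup G).lowerCentralSeries (k + 2) := by
      have hid : ⁅x * y, a⁆ * (⁅x, a⁆ * ⁅y, a⁆)⁻¹ = ⁅x, ⁅y, a⁆⁆ * ⁅⁅y, a⁆, ⁅x, a⁆⁆ := by
        simp only [commutatorElement_def]; group
      rw [hid]
      exact ((⊤ : Subgroup G).lowerCentralSeries (k + 2)).mul_mem
        (comm_mem' (k + 1) (comm_mem k hy a) x)
        (comm_mem (k + 1) (comm_mem k hy a) ⁅x, a⁆)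
    have c1 := foldl_cong t (k + 2) ⁅x * y, a⁆ (⁅x, a⁆ * ⁅y, a⁆) E1
    have c2 := foldl_mul t (k + 1) ⁅x, a⁆ ⁅y, a⁆ (comm_mem k hx a) (comm_mem k hy a)
    have c3 := cong_trans c1 (lcs_cast c2 (by omega))
    exact lcs_cast c3 (by simp; omega)

private lemma foldl_inv : ∀ (l : List G) (k : ℕ) (x : G),
    x ∈ (⊤ : Subgroup G).lowerCentralSeries k →
    (List.foldl (fun x y => ⁅x, y⁆) x⁻¹ l) *
      ((List.foldl (fun x y => ⁅x, y⁆) x l)⁻¹)⁻¹ ∈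
      (⊤ : Subgroup G).lowerCentralSeries (k + 1 + l.length)
  | [], k, x, hx => by
    have h : x⁻¹ * (x⁻¹)⁻¹ = 1 := by group
    show x⁻¹ * (x⁻¹)⁻¹ ∈ _
    rw [h]; exact Subgroup.one_mem _
  | a :: t, k, x, hx => by
    have E2 : ⁅x⁻¹, a⁆ * (⁅x, a⁆⁻¹)⁻¹ ∈ (⊤ : Subgroup G).lowerCentralSeries (k + 2) := by
      have hid : ⁅x⁻¹, a⁆ * (⁅x, a⁆⁻¹)⁻¹ = x⁻¹ * ⁅⁅x, a⁆⁻¹, x⁆ * x := by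
        simp only [commutatorElement_def]; group
      rw [hid]
      have hn : ((⊤ : Subgroup G).lowerCentralSeries (k + 2)).Normal := inferInstance
      have := hn.conj_mem _
        (comm_mem (k + 1) (((⊤ : Subgroup G).lowerCentralSeries (k + 1)).inv_mem (comm_mem k hx a)) x) x⁻¹
      simpa using this
    have c1 := foldl_cong t (k + 2) ⁅x⁻¹, a⁆ (⁅x, a⁆⁻¹) E2
    have c2 := foldl_inv t (k + 1) ⁅x, a⁆ (comm_mem k hx a)
    have c3 := cong_trans c1 (lcs_cast c2 (by omega))
    exact lcs_cast c3 (by simp; omega)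

private lemma exists_index_list {α β : Type*} (f : α → β) :
    ∀ l : List β, (∀ y ∈ l, y ∈ Set.range f) → ∃ il : List α, l = il.map f
  | [], _ => ⟨[], rfl⟩
  | b :: t, h => by
    obtain ⟨a, ha⟩ := h b (List.mem_cons_self)
    obtain ⟨il, hil⟩ := exists_index_list f t (fun y hy => h y (List.mem_cons_of_mem _ hy))
    exact ⟨a :: il, by simp [← ha, ← hil]⟩

/-- Main auxiliary result: if `⁅w, g⁆ = 1` for every left-normed commutator `w` of
`c' + 1` generators, then `g` centralizes `γ_{c'}(G)`. -/
private lemma aux_main {c' m : ℕ} (gs : Fin m → G)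
    (hgen : Subgroup.closure (Set.range gs) = ⊤)
    (hG : (⊤ : Subgroup G).lowerCentralSeries (c' + 2) = ⊥)
    (g : G)
    (hg : ∀ a ∈ Set.range gs, ∀ l : List G, (∀ y ∈ l, y ∈ Set.range gs) →
      l.length = c' → ⁅List.foldl (fun x y => ⁅x, y⁆) a l, g⁆ = 1) :
    ∀ x ∈ (⊤ : Subgroup G).lowerCentralSeries c', ⁅x, g⁆ = 1 := by
  -- γ_{c'+1} is central
  have hbot : ∀ u : G, u ∈ (⊤ : Subgroup G).lowerCentralSeries (c' + 1) → ∀ z : G, ⁅u, z⁆ = 1 := by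
    intro u hu z
    have := comm_mem (c' + 1) hu z
    rw [show c' + 1 + 1 = c' + 2 from rfl, hG] at this
    exact Subgroup.mem_bot.mp this
  have hbot' : ∀ u : G, u ∈ (⊤ : Subgroup G).lowerCentralSeries (c' + 1) → ∀ z : G, ⁅z, u⁆ = 1 := by
    intro u hu z
    rw [← commutatorElement_inv, hbot u hu z, inv_one]
  have hcong : ∀ u v : G, u * v⁻¹ ∈ (⊤ : Subgroup G).lowerCentralSeries (c' + 1) → ⁅u, g⁆ = ⁅v, g⁆ := by
    intro u v h
    have := comm_cong (c' + 1) g h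
    rw [show c' + 1 + 1 = c' + 2 from rfl, hG, Subgroup.mem_bot] at this
    exact mul_inv_eq_one.mp this
  have hmulbr : ∀ u v : G, u ∈ (⊤ : Subgroup G).lowerCentralSeries c' → v ∈ (⊤ : Subgroup G).lowerCentralSeries c' →
      ⁅u * v, g⁆ = ⁅u, g⁆ * ⁅v, g⁆ := by
    intro u v hu hv
    have hid : ⁅u * v, g⁆ = ⁅u, ⁅v, g⁆⁆ * ⁅⁅v, g⁆, ⁅u, g⁆⁆ * (⁅u, g⁆ * ⁅v, g⁆) := by
      simp only [commutatorElement_def]; group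
    rw [hid, hbot' _ (comm_mem c' hv g) u, hbot _ (comm_mem c' hv g) ⁅u, g⁆, one_mul, one_mul]
  have hinvbr : ∀ u : G, u ∈ (⊤ : Subgroup G).lowerCentralSeries c' → ⁅u⁻¹, g⁆ = ⁅u, g⁆⁻¹ := by
    intro u hu
    have hid : ⁅u⁻¹, g⁆ * ⁅u, g⁆ = u⁻¹ * ⁅⁅u, g⁆⁻¹, u⁆ * u := by
      simp only [commutatorElement_def]; group
    have h2 : ⁅⁅u, g⁆⁻¹, u⁆ = 1 :=
      hbot _ (((⊤ : Subgroup G).lowerCentralSeries (c' + 1)).inv_mem (comm_mem c' hu g)) u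
    rw [h2] at hid
    simp only [mul_one] at hid
    have : ⁅u⁻¹, g⁆ * ⁅u, g⁆ = 1 := by rw [hid]; group
    exact eq_inv_of_mul_eq_one_left this
  -- main induction over the lower central series level
  have key : ∀ k : ℕ, ∀ x ∈ (⊤ : Subgroup G).lowerCentralSeries k, ∀ l : List G,
      (∀ y ∈ l, y ∈ Set.range gs) → k + l.length = c' →
      ⁅List.foldl (fun x y => ⁅x, y⁆) x l, g⁆ = 1 := by
    intro k
    induction k with
    | zero =>
      intro x hx0 l hl hlen
      have hx : x ∈ Subgroup.closure (Set.range gs) := by rw [hgen]; trivial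
      clear hx0
      induction hx using Subgroup.closure_induction with
      | mem a ha => exact hg a ha l hl (by omega)
      | one => rw [foldl_one]; exact commutatorElement_one_left g
      | mul x y hx hy ihx ihy =>
        have h1 := foldl_mul l 0 x y (Subgroup.mem_top x) (Subgroup.mem_top y)
        have h1' := lcs_cast h1 (show 0 + 1 + l.length = c' + 1 by omega)
        rw [hcong _ _ h1',
          hmulbr _ _ (lcs_cast (foldl_mem l 0 x (Subgroup.mem_top x)) (by omega))
            (lcs_cast (foldl_mem l 0 y (Subgroup.mem_top y)) (by omega)), ihx, ihy, one_mul]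
      | inv x hx ihx =>
        have h1 := foldl_inv l 0 x (Subgroup.mem_top x)
        have h1' := lcs_cast h1 (show 0 + 1 + l.length = c' + 1 by omega)
        have h2 : List.foldl (fun x y => ⁅x, y⁆) x⁻¹ l *
            ((List.foldl (fun x y => ⁅x, y⁆) x l)⁻¹)⁻¹ ∈ (⊤ : Subgroup G).lowerCentralSeries (c' + 1) := h1'
        rw [show ((List.foldl (fun x y => ⁅x, y⁆) x l)⁻¹)⁻¹ =
          ((List.foldl (fun x y => ⁅x, y⁆) x l)⁻¹)⁻¹ from rfl] at h2
        rw [hcong _ _ h2, hinvbr _ (lcs_cast (foldl_mem l 0 x (Subgroup.mem_top x)) (by omega)),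
          ihx, inv_one]
    | succ k ih =>
      intro x hx l hl hlen
      rw [lcs_succ_eq, Subgroup.commutator_def] at hx
      induction hx using Subgroup.closure_induction with
      | mem z hz =>
        obtain ⟨p, hp, q, -, rfl⟩ := hz
        have hq : q ∈ Subgroup.closure (Set.range gs) := by rw [hgen]; trivial
        induction hq using Subgroup.closure_induction with
        | mem b hb =>
          have := ih p hp (b :: l) (List.forall_mem_cons.mpr ⟨hb, hl⟩) (by simp; omega)
          exact this
        | one =>
          rw [commutatorElement_one_right, foldl_one]
          exact commutatorElement_one_left g
        | mul q₁ q₂ hq1 hq2 ih1 ih2 =>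
          have E3 : ⁅p, q₁ * q₂⁆ * (⁅p, q₁⁆ * ⁅p, q₂⁆)⁻¹ ∈ (⊤ : Subgroup G).lowerCentralSeries (k + 2) := by
            have hid : ⁅p, q₁ * q₂⁆ * (⁅p, q₁⁆ * ⁅p, q₂⁆)⁻¹ =
                ⁅p, q₁⁆ * ⁅q₁, ⁅p, q₂⁆⁆ * ⁅p, q₁⁆⁻¹ := by
              simp only [commutatorElement_def]; group
            rw [hid]
            have hn : ((⊤ : Subgroup G).lowerCentralSeries (k + 2)).Normal := inferInstance
            have := hn.conj_mem _ (comm_mem' (k + 1) (comm_mem k hp q₂) q₁) ⁅p, q₁⁆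
            simpa [mul_assoc] using this
          have c1 := foldl_cong l (k + 2) _ _ E3
          have c2 := foldl_mul l (k + 1) ⁅p, q₁⁆ ⁅p, q₂⁆ (comm_mem k hp q₁) (comm_mem k hp q₂)
          have c3 := cong_trans c1 (lcs_cast c2 (by omega))
          have c3' := lcs_cast c3 (show k + 2 + l.length = c' + 1 by omega)
          rw [hcong _ _ c3',
            hmulbr _ _ (lcs_cast (foldl_mem l (k + 1) _ (comm_mem k hp q₁)) (by omega))
              (lcs_cast (foldl_mem l (k + 1) _ (comm_mem k hp q₂)) (by omega)), ih1, ih2, one_mul]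
        | inv q hq0 ihq =>
          have E4 : ⁅p, q⁻¹⁆ * (⁅p, q⁆⁻¹)⁻¹ ∈ (⊤ : Subgroup G).lowerCentralSeries (k + 2) := by
            have hid : ⁅p, q⁻¹⁆ * (⁅p, q⁆⁻¹)⁻¹ = q⁻¹ * ⁅⁅p, q⁆⁻¹, q⁆ * q := by
              simp only [commutatorElement_def]; group
            rw [hid]
            have hn : ((⊤ : Subgroup G).lowerCentralSeries (k + 2)).Normal := inferInstance
            have := hn.conj_mem _
              (comm_mem (k + 1) (((⊤ : Subgroup G).lowerCentralSeries (k + 1)).inv_mem (comm_mem k hp q)) q) q⁻¹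
            simpa using this
          have c1 := foldl_cong l (k + 2) _ _ E4
          have c2 := foldl_inv l (k + 1) ⁅p, q⁆ (comm_mem k hp q)
          have c3 := cong_trans c1 (lcs_cast c2 (by omega))
          have c3' := lcs_cast c3 (show k + 2 + l.length = c' + 1 by omega)
          rw [hcong _ _ c3',
            hinvbr _ (lcs_cast (foldl_mem l (k + 1) _ (comm_mem k hp q)) (by omega)), ihq, inv_one]
      | one => rw [foldl_one]; exact commutatorElement_one_left g
      | mul x y hx' hy' ihx ihy =>
        have hx'' : x ∈ (⊤ : Subgroup G).lowerCentralSeries (k + 1) := by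
          rw [lcs_succ_eq, Subgroup.commutator_def]; exact hx'
        have hy'' : y ∈ (⊤ : Subgroup G).lowerCentralSeries (k + 1) := by
          rw [lcs_succ_eq, Subgroup.commutator_def]; exact hy'
        have h1 := foldl_mul l (k + 1) x y hx'' hy''
        have h1' := lcs_cast h1 (show k + 1 + 1 + l.length = c' + 1 by omega)
        rw [hcong _ _ h1',
          hmulbr _ _ (lcs_cast (foldl_mem l (k + 1) x hx'') (by omega))
            (lcs_cast (foldl_mem l (k + 1) y hy'') (by omega)), ihx, ihy, one_mul]
      | inv x hx' ihx =>
        have hx'' : x ∈ (⊤ : Subgroup G).lowerCentralSeries (k + 1) := by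
          rw [lcs_succ_eq, Subgroup.commutator_def]; exact hx'
        have h1 := foldl_inv l (k + 1) x hx''
        have h1' := lcs_cast h1 (show k + 1 + 1 + l.length = c' + 1 by omega)
        rw [hcong _ _ h1', hinvbr _ (lcs_cast (foldl_mem l (k + 1) x hx'') (by omega)),
          ihx, inv_one]
  intro x hx
  have := key c' x hx [] (by simp) (by simp)
  simpa using this

end AuxLemmas

/-- Let `G` be a nilpotent group of class at most `c + 1` with generating set
`gs 0, …, gs (m-1)`.  Let `H` be the intersection, over all sequences
`i : Fin c → Fin m`, of the kernels of the maps
`φ_{i₁,…,i_c} : g ↦ [[[…[[g_{i₁},g_{i₂}],g_{i₃}]…],g_{i_c}], g]`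
(i.e. `g ∈ H` iff all these iterated commutators vanish).  Then `H` is nilpotent of
class at most `c`. -/
theorem kernel_intersection_nilpotent {G : Type*} [Group G] (c m : ℕ) (hc : 0 < c)
    (gs : Fin m → G) (hgen : Subgroup.closure (Set.range gs) = ⊤)
    (hG : (⊤ : Subgroup G).lowerCentralSeries (c + 1) = ⊥)
    (H : Subgroup G)
    (hH : ∀ g : G, g ∈ H ↔ ∀ i : Fin c → Fin m, ⁅iterComm (List.ofFn (gs ∘ i)), g⁆ = 1) :
    (⊤ : Subgroup H).lowerCentralSeries c = ⊥ := by
  obtain ⟨c', rfl⟩ : ∃ c', c = c' + 1 := ⟨c - 1, by omega⟩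
  rw [eq_bot_iff, lcs_succ_eq]
  refine Subgroup.commutator_le.mpr fun x hx y _ => ?_
  rw [Subgroup.mem_bot]
  -- derive the hypothesis of aux_main for g := ↑y
  have hg : ∀ a ∈ Set.range gs, ∀ l : List G, (∀ z ∈ l, z ∈ Set.range gs) →
      l.length = c' → ⁅List.foldl (fun x y => ⁅x, y⁆) a l, (y : G)⁆ = 1 := by
    rintro a ⟨i₀, rfl⟩ l hl hlen
    obtain ⟨il, rfl⟩ := exists_index_list gs l hl
    have hlen' : (i₀ :: il).length = c' + 1 := by
      simp only [List.length_cons, List.length_map] at hlen ⊢; omega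
    have hy := (hH y).mp y.2 (fun t => (i₀ :: il).get (Fin.cast hlen'.symm t))
    have hof : List.ofFn (gs ∘ fun t => (i₀ :: il).get (Fin.cast hlen'.symm t)) =
        (i₀ :: il).map gs := by
      apply List.ext_getElem
      · simp only [List.length_map, List.length_cons] at hlen ⊢
        simp only [List.length_ofFn]
        omega
      · intro n h1 h2
        simp only [List.getElem_ofFn, Function.comp_apply, List.getElem_map,
          List.get_eq_getElem, Fin.coe_cast]
    rw [hof] at hy
    simpa [iterComm] using hy
  have hcent := aux_main gs hgen hG (y : G) hg
  have hxG : (x : G) ∈ (⊤ : Subgroup G).lowerCentralSeries c' :=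
    Subgroup.lowerCentralSeries_map_subtype_le H c' (Subgroup.mem_map_of_mem H.subtype hx)
  exact Subtype.ext (hcent (x : G) hxG)
end

section
/- Let G be a finite group of Lie-type data as follows: G sits in a short exact sequence 1 → N → G → Γ → 1 where |N| ≤ J, Γ is nilpotent of class at most c, and G acts trivially on N by conjugation (N is central in G). If furthermore every subgroup of G can be generated by m elements, then G contains a nilpotent subgroup H of class at most c with index bounded by a constant depending only on c, J, m. -/
open Subgroup
open scoped commutatorElement

section Aux

variable {G : Type} [Group G]

private theorem three_subgroups_lemma {H K L M : Subgroup G} [M.Normal]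
    (h1 : ⁅⁅K, L⁆, H⁆ ≤ M) (h2 : ⁅⁅L, H⁆, K⁆ ≤ M) : ⁅⁅H, K⁆, L⁆ ≤ M := by
  have key : ∀ A B C : Subgroup G, ⁅⁅A, B⁆, C⁆ ≤ M ↔
      ⁅⁅A.map (QuotientGroup.mk' M), B.map (QuotientGroup.mk' M)⁆,
        C.map (QuotientGroup.mk' M)⁆ = ⊥ := by
    intro A B C
    rw [← Subgroup.map_commutator, ← Subgroup.map_commutator, Subgroup.map_eq_bot_iff,
      QuotientGroup.ker_mk']
  rw [key]
  exact Subgroup.commutator_commutator_eq_bot_of_rotate ((key K L H).mp h1) ((key L H K).mp h2)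

private theorem lcs_succ' (i : ℕ) :
    (⊤ : Subgroup G).lowerCentralSeries (i + 1) = ⁅(⊤ : Subgroup G).lowerCentralSeries i, ⊤⁆ := rfl

private theorem lcs_comm (i j : ℕ) :
    ⁅(⊤ : Subgroup G).lowerCentralSeries i, (⊤ : Subgroup G).lowerCentralSeries j⁆ ≤ (⊤ : Subgroup G).lowerCentralSeries (i + j + 1) := by
  induction j generalizing i with
  | zero =>
    rw [Subgroup.lowerCentralSeries_zero]
    exact le_of_eq (lcs_succ' i).symm
  | succ j ih =>
    rw [Subgroup.commutator_comm, lcs_succ']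
    apply three_subgroups_lemma
    · calc ⁅⁅(⊤ : Subgroup G), (⊤ : Subgroup G).lowerCentralSeries i⁆, (⊤ : Subgroup G).lowerCentralSeries j⁆
          = ⁅(⊤ : Subgroup G).lowerCentralSeries (i + 1), (⊤ : Subgroup G).lowerCentralSeries j⁆ := by
            rw [Subgroup.commutator_comm (⊤ : Subgroup G), ← lcs_succ']
        _ ≤ (⊤ : Subgroup G).lowerCentralSeries ((i + 1) + j + 1) := ih (i + 1)
        _ = (⊤ : Subgroup G).lowerCentralSeries (i + (j + 1) + 1) := by congr 1 <;> omega
    · calc ⁅⁅(⊤ : Subgroup G).lowerCentralSeries i, (⊤ : Subgroup G).lowerCentralSeries j⁆, (⊤ : Subgroup G)⁆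
          ≤ ⁅(⊤ : Subgroup G).lowerCentralSeries (i + j + 1), (⊤ : Subgroup G)⁆ :=
            Subgroup.commutator_mono (ih i) le_rfl
        _ = (⊤ : Subgroup G).lowerCentralSeries ((i + j + 1) + 1) := (lcs_succ' _).symm
        _ = (⊤ : Subgroup G).lowerCentralSeries (i + (j + 1) + 1) := by congr 1 <;> omega

/-- iterated commutator `⁅⁅…⁅g, y₁⁆, y₂⁆, …, yₖ⁆`. -/
private def ccomm : G → List G → G
  | g, [] => g
  | g, y :: ys => ccomm ⁅g, y⁆ ys

@[simp] private theorem ccomm_nil (g : G) : ccomm g [] = g := rfl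

@[simp] private theorem ccomm_cons (g y : G) (ys : List G) :
    ccomm g (y :: ys) = ccomm ⁅g, y⁆ ys := rfl

private theorem ccomm_append (g : G) (l1 l2 : List G) :
    ccomm g (l1 ++ l2) = ccomm (ccomm g l1) l2 := by
  induction l1 generalizing g with
  | nil => rfl
  | cons y t ih => simp [ccomm_cons, ih]

private theorem ccomm_one (ys : List G) : ccomm (1 : G) ys = 1 := by
  induction ys with
  | nil => rfl
  | cons y t ih => simp [ccomm_cons, commutatorElement_one_left, ih]

private theorem ccomm_mem (ys : List G) (i : ℕ) (g : G) (hg : g ∈ (⊤ : Subgroup G).lowerCentralSeries i) :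
    ccomm g ys ∈ (⊤ : Subgroup G).lowerCentralSeries (i + ys.length) := by
  induction ys generalizing g i with
  | nil => simpa using hg
  | cons y t ih =>
    have h1 : ⁅g, y⁆ ∈ (⊤ : Subgroup G).lowerCentralSeries (i + 1) := by
      rw [lcs_succ']
      exact Subgroup.commutator_mem_commutator hg (mem_top y)
    have h2 := ih (i + 1) ⁅g, y⁆ h1
    have h3 : i + 1 + t.length = i + (y :: t).length := by simp; omega
    rw [ccomm_cons, ← h3]
    exact h2

variable {n : ℕ}

private theorem ccomm_vanish (hbot : (⊤ : Subgroup G).lowerCentralSeries (n + 1) = ⊥) (ys : List G) (i : ℕ) (g : G)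
    (hg : g ∈ (⊤ : Subgroup G).lowerCentralSeries i) (h : n + 1 ≤ i + ys.length) : ccomm g ys = 1 := by
  have h1 := ccomm_mem ys i g hg
  have h2 : (⊤ : Subgroup G).lowerCentralSeries (i + ys.length) ≤ (⊤ : Subgroup G).lowerCentralSeries (n + 1) :=
    Subgroup.lowerCentralSeries_antitone ⊤ h
  rw [hbot] at h2
  simpa using h2 h1

private theorem ccomm_swap (hbot : (⊤ : Subgroup G).lowerCentralSeries (n + 1) = ⊥) {i j : ℕ} {a b : G} (ha : a ∈ (⊤ : Subgroup G).lowerCentralSeries i)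
    (hb : b ∈ (⊤ : Subgroup G).lowerCentralSeries j) (h : n ≤ i + j) : a * b = b * a := by
  have h1 : ⁅a, b⁆ ∈ (⊤ : Subgroup G).lowerCentralSeries (i + j + 1) :=
    lcs_comm i j (Subgroup.commutator_mem_commutator ha hb)
  have h2 : (⊤ : Subgroup G).lowerCentralSeries (i + j + 1) ≤ (⊤ : Subgroup G).lowerCentralSeries (n + 1) :=
    Subgroup.lowerCentralSeries_antitone ⊤ (by omega)
  rw [hbot] at h2
  exact commutatorElement_eq_one_iff_mul_comm.mp (by simpa using h2 h1)

private theorem ccomm_mul (hbot : (⊤ : Subgroup G).lowerCentralSeries (n + 1) = ⊥) (ys : List G) (i j : ℕ) (a b : G)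
    (ha : a ∈ (⊤ : Subgroup G).lowerCentralSeries i) (hb : b ∈ (⊤ : Subgroup G).lowerCentralSeries j)
    (h : n ≤ i + j + ys.length) :
    ccomm (a * b) ys = ccomm a ys * ccomm b ys := by
  induction ys generalizing i j a b with
  | nil => exact rfl
  | cons y t ih =>
    simp only [List.length_cons] at h
    have hv : ⁅b, y⁆ ∈ (⊤ : Subgroup G).lowerCentralSeries (j + 1) := by
      rw [lcs_succ']
      exact Subgroup.commutator_mem_commutator hb (mem_top y)
    have hw : ⁅a, y⁆ ∈ (⊤ : Subgroup G).lowerCentralSeries (i + 1) := by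
      rw [lcs_succ']
      exact Subgroup.commutator_mem_commutator ha (mem_top y)
    have hu : ⁅a, ⁅b, y⁆⁆ ∈ (⊤ : Subgroup G).lowerCentralSeries (i + (j + 1) + 1) :=
      lcs_comm i (j + 1) (Subgroup.commutator_mem_commutator ha hv)
    set q := min i j with hq
    have hv' : ⁅b, y⁆ ∈ (⊤ : Subgroup G).lowerCentralSeries (q + 1) :=
      Subgroup.lowerCentralSeries_antitone ⊤ (by omega) hv
    have hw' : ⁅a, y⁆ ∈ (⊤ : Subgroup G).lowerCentralSeries (q + 1) :=
      Subgroup.lowerCentralSeries_antitone ⊤ (by omega) hw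
    have key : ⁅a * b, y⁆ = ⁅a, ⁅b, y⁆⁆ * (⁅b, y⁆ * ⁅a, y⁆) := by
      simp only [commutatorElement_def]
      group
    rw [ccomm_cons, key,
      ih (i + (j + 1) + 1) (q + 1) _ _ hu (mul_mem hv' hw') (by omega),
      ccomm_vanish hbot t _ _ hu (by omega),
      ih (j + 1) (i + 1) _ _ hv hw (by omega), one_mul]
    have hcb := ccomm_mem t (j + 1) _ hv
    have hca := ccomm_mem t (i + 1) _ hw
    rw [ccomm_swap hbot hcb hca (by omega)]
    rfl

private theorem ccomm_inv (hbot : (⊤ : Subgroup G).lowerCentralSeries (n + 1) = ⊥) (ys : List G) (i : ℕ) (a : G)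
    (ha : a ∈ (⊤ : Subgroup G).lowerCentralSeries i) (h : n ≤ i + i + ys.length) :
    ccomm a⁻¹ ys = (ccomm a ys)⁻¹ := by
  have h1 : ccomm (a⁻¹ * a) ys = ccomm a⁻¹ ys * ccomm a ys :=
    ccomm_mul hbot ys i i a⁻¹ a (inv_mem ha) ha h
  rw [inv_mul_cancel, ccomm_one] at h1
  exact eq_inv_of_mul_eq_one_left h1.symm

end Aux

private theorem list_ofFn_cast {α β : Type} (f : α → β) (l : List α) {k : ℕ}
    (h : k = l.length) :
    List.ofFn (fun i : Fin k => f (l.get (Fin.cast h i))) = l.map f := by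
  subst h
  simpa using List.ofFn_get_eq_map l f

/-- Let `c, J, m` be positive integers.  There is a constant `C` depending only on
`c, J, m` with the following property.  Let `G` be a finite group sitting in a short
exact sequence `1 → N → G → Γ → 1` where `N` is central in `G` (so `G` acts trivially on
`N` by conjugation), `|N| ≤ J`, and `Γ ≅ G ⧸ N` is nilpotent of class at most `c`.  If
moreover every subgroup of `G` can be generated by `m` elements, then `G` contains a
nilpotent subgroup `H` of class at most `c` with index at most `C`. -/
theorem central_extension_jordan (c J m : ℕ) (hc : 0 < c) (hJ : 0 < J) (hm : 0 < m) :
    ∃ C : ℕ, ∀ (G : Type) [Group G], Finite G →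
      ∀ (N : Subgroup G) (_ : N.Normal), N ≤ Subgroup.center G → Nat.card N ≤ J →
        (⊤ : Subgroup (G ⧸ N)).lowerCentralSeries c = ⊥ →
        (∀ H : Subgroup G, ∃ S : Finset G, (S : Set G) ⊆ (H : Set G) ∧ S.card ≤ m ∧
          Subgroup.closure (S : Set G) = H) →
        ∃ H : Subgroup G, (⊤ : Subgroup H).lowerCentralSeries c = ⊥ ∧ H.index ≤ C := by
  refine ⟨J ^ m ^ c, ?_⟩
  intro G _ hfin N hNnormal hNcent hNJ hquot hgen
  haveI : Finite G := hfin
  -- the `c`-th term of the lower central series is small and central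
  set A := (⊤ : Subgroup G).lowerCentralSeries c with hA
  have hAN : A ≤ N := by
    intro x hx
    have h1 : (QuotientGroup.mk' N) x ∈ (⊤ : Subgroup (G ⧸ N)).lowerCentralSeries c := by
      have := Subgroup.mem_map_of_mem (QuotientGroup.mk' N) hx
      rwa [Subgroup.map_lowerCentralSeries,
        Subgroup.map_top_of_surjective _ (QuotientGroup.mk'_surjective N)] at this
    rw [hquot, Subgroup.mem_bot] at h1
    exact (QuotientGroup.eq_one_iff x).mp h1
  have hbot : (⊤ : Subgroup G).lowerCentralSeries (c + 1) = ⊥ := by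
    rw [lcs_succ']
    rw [eq_bot_iff]
    rw [Subgroup.commutator_le]
    intro g1 hg1 g2 _
    rw [Subgroup.mem_bot, commutatorElement_eq_one_iff_mul_comm]
    exact (Subgroup.mem_center_iff.mp (hNcent (hAN hg1)) g2).symm
  have hcardA : Nat.card A ≤ J := le_trans (Subgroup.card_le_of_le hAN) hNJ
  -- generators of G
  obtain ⟨S, -, hScard, hSclosure⟩ := hgen ⊤
  -- the kernels
  have hmemA : ∀ (g : G) (ys : List G), ys.length = c → ccomm g ys ∈ A := by
    intro g ys hys
    have h1 := ccomm_mem ys 0 g (by rw [Subgroup.lowerCentralSeries_zero]; exact mem_top g)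
    rwa [hys, Nat.zero_add] at h1
  let φ : (Fin c → ↥S) → (G →* ↥A) := fun t =>
    MonoidHom.mk' (fun g => ⟨ccomm g (List.ofFn fun i => ((t i : G))),
        hmemA g _ (by simp)⟩)
      (fun a b => Subtype.ext
        (ccomm_mul hbot _ 0 0 a b (by rw [Subgroup.lowerCentralSeries_zero]; exact mem_top a)
          (by rw [Subgroup.lowerCentralSeries_zero]; exact mem_top b) (by simp)))
  set H : Subgroup G := ⨅ t : Fin c → ↥S, (φ t).ker with hH
  have hHmem : ∀ g ∈ H, ∀ t : Fin c → ↥S,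
      ccomm g (List.ofFn fun i => ((t i : G))) = 1 := by
    intro g hg t
    have h1 : g ∈ (φ t).ker := by
      rw [hH, Subgroup.mem_iInf] at hg
      exact hg t
    rw [MonoidHom.mem_ker] at h1
    exact congrArg Subtype.val h1
  -- index bound
  have hindex : H.index ≤ J ^ m ^ c := by
    calc H.index ≤ ∏ t : Fin c → ↥S, (φ t).ker.index := Subgroup.index_iInf_le _
      _ ≤ ∏ _t : Fin c → ↥S, J := by
          apply Finset.prod_le_prod'
          intro t _
          rw [Subgroup.index_ker]
          exact le_trans (Nat.card_le_card_of_injective _ Subtype.val_injective) hcardA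
      _ = J ^ Fintype.card (Fin c → ↥S) := by rw [Finset.prod_const, Finset.card_univ]
      _ ≤ J ^ m ^ c := by
          apply Nat.pow_le_pow_right hJ
          rw [Fintype.card_fun, Fintype.card_fin, Fintype.card_coe]
          exact Nat.pow_le_pow_left hScard c
  refine ⟨H, ?_, hindex⟩
  -- members of H kill all length-c iterated commutators
  have claimP : ∀ (k : ℕ), ∀ g ∈ H, ∀ zs : List G, zs.length = k → ∀ ts : List ↥S,
      k + ts.length = c → ccomm g (zs ++ ts.map Subtype.val) = 1 := by
    intro k
    induction k with
    | zero =>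
      intro g hg zs hzs ts hts
      rw [List.length_eq_zero_iff] at hzs
      subst hzs
      rw [Nat.zero_add] at hts
      rw [List.nil_append, ← list_ofFn_cast Subtype.val ts hts.symm]
      exact hHmem g hg (fun i : Fin c => ts.get (Fin.cast hts.symm i))
    | succ k ih =>
      intro g hg zs hzs ts hts
      rcases List.eq_nil_or_concat' zs with rfl | ⟨zs', z, rfl⟩
      · simp at hzs
      have hzs' : zs'.length = k := by simpa using hzs
      set w := ccomm g zs' with hw
      have hwmem : w ∈ (⊤ : Subgroup G).lowerCentralSeries k := by
        have h1 := ccomm_mem zs' 0 g (by rw [Subgroup.lowerCentralSeries_zero]; exact mem_top g)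
        rwa [hzs', Nat.zero_add] at h1
      have hstep : ∀ x : G, ccomm g ((zs' ++ [x]) ++ ts.map Subtype.val)
          = ccomm ⁅w, x⁆ (ts.map Subtype.val) := by
        intro x
        rw [List.append_assoc, ccomm_append, ← hw]
        rfl
      rw [hstep z]
      -- the map x ↦ ccomm ⁅w, x⁆ (ts.map coe) is a homomorphism
      have hψmul : ∀ x y : G, ccomm ⁅w, x * y⁆ (ts.map Subtype.val)
          = ccomm ⁅w, x⁆ (ts.map Subtype.val)
            * ccomm ⁅w, y⁆ (ts.map Subtype.val) := by
        intro x y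
        have h1 : ⁅w, x⁆ ∈ (⊤ : Subgroup G).lowerCentralSeries (k + 1) := by
          rw [lcs_succ']
          exact Subgroup.commutator_mem_commutator hwmem (mem_top x)
        have h2 : ⁅w, y⁆ ∈ (⊤ : Subgroup G).lowerCentralSeries (k + 1) := by
          rw [lcs_succ']
          exact Subgroup.commutator_mem_commutator hwmem (mem_top y)
        have h3 : ⁅x, ⁅w, y⁆⁆ ∈ (⊤ : Subgroup G).lowerCentralSeries (k + 2) := by
          rw [← commutatorElement_inv]
          apply inv_mem
          show ⁅⁅w,y⁆, x⁆ ∈ (⊤ : Subgroup G).lowerCentralSeries (k + 1 + 1)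
          rw [lcs_succ']
          exact Subgroup.commutator_mem_commutator h2 (mem_top x)
        have h3' : ⁅x, ⁅w, y⁆⁆ ∈ (⊤ : Subgroup G).lowerCentralSeries (k + 1) :=
          Subgroup.lowerCentralSeries_antitone ⊤ (by omega) h3
        have hlen : (ts.map (fun s : ↥S => (s : G))).length = ts.length := by simp
        have key : ⁅w, x * y⁆ = ⁅w, x⁆ * (⁅x, ⁅w, y⁆⁆ * ⁅w, y⁆) := by
          simp only [commutatorElement_def]
          group
        rw [key,
          ccomm_mul hbot _ (k + 1) (k + 1) _ _ h1 (mul_mem h3' h2) (by rw [hlen]; omega),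
          ccomm_mul hbot _ (k + 2) (k + 1) _ _ h3 h2 (by rw [hlen]; omega),
          ccomm_vanish hbot _ (k + 2) _ h3 (by rw [hlen]; omega), one_mul]
      let ψ : G →* G := MonoidHom.mk' (fun x => ccomm ⁅w, x⁆ (ts.map Subtype.val)) hψmul
      have hker : Subgroup.closure (S : Set G) ≤ ψ.ker := by
        rw [Subgroup.closure_le]
        intro s hs
        have h1 := ih g hg zs' hzs' (⟨s, hs⟩ :: ts) (by simp at hts ⊢; omega)
        rw [List.map_cons] at h1
        have h2 : ccomm g (zs' ++ ((s : G) :: ts.map Subtype.val)) =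
            ccomm ⁅w, s⁆ (ts.map Subtype.val) := by
          rw [ccomm_append, ← hw]
          rfl
        rw [h2] at h1
        exact h1
      rw [hSclosure] at hker
      exact hker (mem_top z)
  have hQ : ∀ g ∈ H, ∀ ys : List G, ys.length = c → ccomm g ys = 1 := by
    intro g hg ys hys
    have := claimP c g hg ys hys [] (by simp)
    simpa using this
  -- the auxiliary subgroups E k
  let E : ℕ → Subgroup G := fun k =>
    { carrier := {x | x ∈ (⊤ : Subgroup G).lowerCentralSeries k ∧
        ∀ ys : List G, ys.length = c - k → ccomm x ys = 1}
      one_mem' := ⟨one_mem _, fun ys _ => ccomm_one ys⟩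
      mul_mem' := by
        rintro a b ⟨ha1, ha2⟩ ⟨hb1, hb2⟩
        refine ⟨mul_mem ha1 hb1, fun ys hys => ?_⟩
        rw [ccomm_mul hbot ys k k a b ha1 hb1 (by omega), ha2 ys hys, hb2 ys hys, one_mul]
      inv_mem' := by
        rintro a ⟨ha1, ha2⟩
        refine ⟨inv_mem ha1, fun ys hys => ?_⟩
        rw [ccomm_inv hbot ys k a ha1 (by omega), ha2 ys hys, inv_one] }
  have hEmem : ∀ (k : ℕ) (x : G), x ∈ E k ↔ (x ∈ (⊤ : Subgroup G).lowerCentralSeries k ∧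
      ∀ ys : List G, ys.length = c - k → ccomm x ys = 1) := fun k x => Iff.rfl
  have hE : ∀ k, k ≤ c → ((⊤ : Subgroup ↥H).lowerCentralSeries k).map H.subtype ≤ E k := by
    intro k
    induction k with
    | zero =>
      intro _ x hx
      rw [Subgroup.lowerCentralSeries_zero] at hx
      obtain ⟨y, -, rfl⟩ := hx
      refine ⟨by rw [Subgroup.lowerCentralSeries_zero]; exact mem_top _, fun ys hys => ?_⟩
      exact hQ (H.subtype y) y.2 ys (by omega)
    | succ k ih =>
      intro hkc
      rw [lcs_succ', Subgroup.map_commutator]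
      have h1 : ⁅((⊤ : Subgroup ↥H).lowerCentralSeries k).map H.subtype,
          Subgroup.map H.subtype ⊤⁆ ≤ ⁅E k, (⊤ : Subgroup G)⁆ :=
        Subgroup.commutator_mono (ih (by omega)) le_top
      refine le_trans h1 ?_
      rw [Subgroup.commutator_le]
      intro a ha y _
      obtain ⟨ha1, ha2⟩ := (hEmem k a).mp ha
      refine ⟨?_, fun ys hys => ?_⟩
      · rw [lcs_succ']
        exact Subgroup.commutator_mem_commutator ha1 (mem_top y)
      · have := ha2 (y :: ys) (by simp [hys]; omega)
        rwa [ccomm_cons] at this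
  have hfinal := hE c le_rfl
  rw [eq_bot_iff]
  intro x hx
  have h1 : H.subtype x ∈ E c := hfinal ⟨x, hx, rfl⟩
  obtain ⟨-, h2⟩ := (hEmem c _).mp h1
  have h3 := h2 [] (by simp)
  rw [ccomm_nil] at h3
  rw [Subgroup.mem_bot]
  exact Subtype.ext h3
end
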